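/- The set Y = {0} ∪ {1/j : j ∈ ℕ, j ≥ 1} ⊂ ℝ does not satisfy property PS(C, t^α) for any C > 1 and any α > 0; in fact, no family of balls covering Y can simultaneously satisfy the proportional C-separation condition B(z_j, r_j) ∩ B(z_k, C r_k) = ∅ for j ≠ k while keeping ∑_j r_j^α arbitrarily small, because any ball covering 0 with small radius forces infinitely many points 1/j into separated balls whose radii cannot decay fast enough near 0. -/

import Mathlib

set_option maxHeartbeats 1000000


theorem stmt15 (C : ℝ) (hC : 1 < C) (α : ℝ) (hα : 0 < α) :
    ¬ (∀ ε : ℝ, 0 < ε →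
        ∃ z r : ℕ → ℝ, (∀ j, 0 < r j) ∧
          (insert (0:ℝ) {x : ℝ | ∃ j : ℕ, 1 ≤ j ∧ x = 1 / j} ⊆ ⋃ j, Metric.ball (z j) (r j)) ∧
          (∀ j k, j ≠ k → Disjoint (Metric.ball (z j) (r j)) (Metric.ball (z k) (C * r k))) ∧
          Summable (fun j => r j ^ α) ∧ ∑' j, r j ^ α < ε) := by
  intro h
  set δ : ℝ := min ((C - 1) / 8) (1 / 4) with hδdef
  have hδpos : 0 < δ := lt_min (by linarith) (by norm_num)
  have hδ1 : δ ≤ (C - 1) / 8 := min_le_left _ _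
  have hδ2 : δ ≤ 1 / 4 := min_le_right _ _
  obtain ⟨z, r, hr, hcov, hdisj, hsum, hlt⟩ := h (δ ^ α) (Real.rpow_pos_of_pos hδpos α)
  -- the ball containing 0
  have h0 : (0 : ℝ) ∈ ⋃ j, Metric.ball (z j) (r j) := hcov (Set.mem_insert _ _)
  obtain ⟨j0, hj0⟩ := Set.mem_iUnion.mp h0
  rw [Metric.mem_ball, Real.dist_eq] at hj0
  have hz0 : |z j0| < r j0 := by rwa [zero_sub, abs_neg] at hj0
  set z0 := z j0 with hz0def
  set r0 := r j0 with hr0def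
  have hr0 : 0 < r0 := hr j0
  obtain ⟨hz0l, hz0r⟩ := abs_lt.mp hz0
  -- r0 < δ
  have hr0δ : r0 < δ := by
    by_contra hcon
    push_neg at hcon
    have h1 : δ ^ α ≤ r0 ^ α := Real.rpow_le_rpow hδpos.le hcon hα.le
    have h2 : r0 ^ α ≤ ∑' j, r j ^ α :=
      Summable.le_tsum hsum j0 (fun j _ => Real.rpow_nonneg (hr j).le α)
    linarith
  set t : ℝ := z0 + r0 with htdef
  have ht : 0 < t := by linarith
  have ht2 : t < 2 * r0 := by linarith
  have hthalf : t < 1 / 2 := by linarith [lt_of_lt_of_le hr0δ hδ2]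
  -- the first point of Y at or above t
  set m : ℕ := ⌊t⁻¹⌋₊ with hmdef
  have hm1 : 1 ≤ m := by
    apply Nat.le_floor
    rw [Nat.cast_one]
    rw [le_inv_comm₀ one_pos ht]
    linarith
  have hMpos : (0 : ℝ) < (m : ℝ) := by exact_mod_cast hm1
  have hmle : (m : ℝ) ≤ t⁻¹ := Nat.floor_le (by positivity)
  have hmgt : t⁻¹ < (m : ℝ) + 1 := Nat.lt_floor_add_one _
  set p : ℝ := 1 / (m : ℝ) with hpdef
  have hppos : 0 < p := by positivity
  have hpm : p * (m : ℝ) = 1 := by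
    rw [hpdef]; exact one_div_mul_cancel hMpos.ne'
  have hp_ge : t ≤ p := by
    have h1 : t * (m : ℝ) ≤ t * t⁻¹ := mul_le_mul_of_nonneg_left hmle ht.le
    rw [mul_inv_cancel₀ ht.ne'] at h1
    rw [hpdef, le_div_iff₀ hMpos]
    linarith
  have hp_le : p ≤ t + 2 * t ^ 2 := by
    have h1 : 1 < t * ((m : ℝ) + 1) := by
      calc 1 = t * t⁻¹ := (mul_inv_cancel₀ ht.ne').symm
      _ < t * ((m : ℝ) + 1) := by
          exact mul_lt_mul_of_pos_left hmgt ht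
    have h2 : p * (1 - t) ≤ t := by
      have h3 : p * (1 - t) < p * (t * (m : ℝ)) := by
        apply mul_lt_mul_of_pos_left _ hppos
        nlinarith
      have h4 : p * (t * (m : ℝ)) = t := by
        rw [show p * (t * (m : ℝ)) = t * (p * (m : ℝ)) by ring, hpm, mul_one]
      linarith
    nlinarith
  -- p is in the covered set
  have hpY : p ∈ ⋃ j, Metric.ball (z j) (r j) := by
    apply hcov
    right
    exact ⟨m, hm1, by rw [hpdef]⟩
  obtain ⟨k, hk⟩ := Set.mem_iUnion.mp hpY
  rw [Metric.mem_ball, Real.dist_eq, abs_lt] at hk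
  obtain ⟨hk1, hk2⟩ := hk
  have hkj0 : k ≠ j0 := by
    intro hkeq
    rw [hkeq] at hk1 hk2
    -- p < z0 + r0 = t contradicts t ≤ p
    rw [← hz0def, ← hr0def] at hk1 hk2
    linarith
  -- disjointness of ball k from the C-dilated ball around z0
  have hdk := hdisj k j0 hkj0
  rw [← hz0def, ← hr0def] at hdk
  have hsep : z0 + C * r0 ≤ z k - r k := by
    by_contra hcon
    push_neg at hcon
    have hCr0 : 0 < C * r0 := by positivity
    have ha1 : z k - r k ≤ max (z k - r k) (z0 - C * r0) := le_max_left _ _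
    have ha2 : z0 - C * r0 ≤ max (z k - r k) (z0 - C * r0) := le_max_right _ _
    have hb1 : min (z k + r k) (z0 + C * r0) ≤ z k + r k := min_le_left _ _
    have hb2 : min (z k + r k) (z0 + C * r0) ≤ z0 + C * r0 := min_le_right _ _
    have hab : max (z k - r k) (z0 - C * r0) < min (z k + r k) (z0 + C * r0) := by
      apply max_lt <;> apply lt_min
      · linarith [hr k]
      · exact hcon
      · linarith
      · linarith
    set w : ℝ := (max (z k - r k) (z0 - C * r0) + min (z k + r k) (z0 + C * r0)) / 2 with hwdef
    have hmem1 : w ∈ Metric.ball (z k) (r k) := by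
      rw [Metric.mem_ball, Real.dist_eq, abs_lt]
      constructor <;> [linarith; linarith]
    have hmem2 : w ∈ Metric.ball z0 (C * r0) := by
      rw [Metric.mem_ball, Real.dist_eq, abs_lt]
      constructor <;> [linarith; linarith]
    exact Set.disjoint_left.mp hdk hmem1 hmem2
  -- final contradiction
  have hfin : z0 + C * r0 < p := lt_of_le_of_lt hsep (by linarith)
  have h1 : (C - 1) * r0 < 2 * t ^ 2 := by nlinarith [hfin, hp_le]
  have h2 : t ^ 2 < 4 * r0 ^ 2 := by nlinarith [ht, ht2]
  have h3 : C - 1 < 8 * r0 := by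
    have h4 : (C - 1) * r0 < (8 * r0) * r0 := by nlinarith
    exact lt_of_mul_lt_mul_right h4 hr0.le
  linarith [hδ1, hr0δ]
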